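/- Let B ∈ {0,1}^{m×n} be a 0-1 matrix with all row sums at most μ and all column sums at most μ, for a positive integer μ, and let S ∈ ℝ_{≥0}^{m×n} be a nonnegative weight matrix. Then there exists a 0-1 matrix A with A ≤ B entrywise, all row sums of A at most 1, all column sums of A at most 1, and Σ_{i,j} A_{ij}S_{ij} ≥ (1/μ)·Σ_{i,j} B_{ij}S_{ij}. -/

import Mathlib

open Finset

/-- Summing a function supported on the first `n` coordinates of `Fin k`. -/
lemma sum_dite_fin {M : Type*} [AddCommMonoid M] {k n : ℕ} (h : n ≤ k) (g : Fin n → M) :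
    ∑ q : Fin k, (if hq : (q : ℕ) < n then g ⟨q.1, hq⟩ else 0) = ∑ j : Fin n, g j := by
  have h1 := Fin.sum_univ_eq_sum_range (fun x => if hq : x < n then g ⟨x, hq⟩ else 0) k
  have h2 := Fin.sum_univ_eq_sum_range (fun x => if hq : x < n then g ⟨x, hq⟩ else 0) n
  rw [h1, ← Finset.sum_subset (Finset.range_subset_range.mpr h) (by
    intro x _ hx
    rw [Finset.mem_range] at hx
    rw [dif_neg hx]), ← h2]
  apply Finset.sum_congr rfl
  intro j _
  rw [dif_pos j.2]

/-- A sum of an indicator of a single value is at most one. -/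
lemma sum_indicator_le_one (n c : ℕ) : (∑ j : Fin n, if (j : ℕ) = c then 1 else 0) ≤ 1 := by
  rw [← Finset.card_filter]
  apply Finset.card_le_one.mpr
  intro a ha b hb
  simp only [Finset.mem_filter] at ha hb
  exact Fin.ext (ha.2.trans hb.2.symm)

lemma sum_indicator_le_one' (n c : ℕ) : (∑ j : Fin n, if c = (j : ℕ) then 1 else 0) ≤ 1 := by
  calc (∑ j : Fin n, if c = (j : ℕ) then 1 else 0)
      = ∑ j : Fin n, if (j : ℕ) = c then 1 else 0 := by
        apply Finset.sum_congr rfl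
        intro j _
        by_cases h : (j : ℕ) = c
        · simp [h]
        · rw [if_neg h, if_neg (fun hc => h hc.symm)]
  _ ≤ 1 := sum_indicator_le_one n c

/-- Regularization: a square ℕ-matrix with row and column sums at most μ can be increased
to one with all row and column sums exactly μ. -/
lemma exists_regular_extension (k μ : ℕ) (C : Fin k → Fin k → ℕ)
    (hrow : ∀ i, ∑ j, C i j ≤ μ) (hcol : ∀ j, ∑ i, C i j ≤ μ) :
    ∃ D : Fin k → Fin k → ℕ, (∀ i j, C i j ≤ D i j) ∧
      (∀ i, ∑ j, D i j = μ) ∧ (∀ j, ∑ i, D i j = μ) := by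
  classical
  have htot : ∑ i, ∑ j, C i j ≤ k * μ := by
    calc ∑ i : Fin k, ∑ j, C i j ≤ ∑ _i : Fin k, μ := Finset.sum_le_sum fun i _ => hrow i
    _ = k * μ := by simp [mul_comm]
  obtain ⟨d, hd⟩ : ∃ d, k * μ - ∑ i, ∑ j, C i j = d := ⟨_, rfl⟩
  induction d generalizing C with
  | zero =>
    have heq : ∑ i, ∑ j, C i j = k * μ := by omega
    refine ⟨C, fun i j => le_rfl, ?_, ?_⟩
    · intro i
      by_contra hne
      have hlt : ∑ j, C i j < μ := lt_of_le_of_ne (hrow i) hne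
      have : ∑ i, ∑ j, C i j < ∑ _i : Fin k, μ :=
        Finset.sum_lt_sum (fun i _ => hrow i) ⟨i, Finset.mem_univ i, hlt⟩
      simp [mul_comm] at this
      omega
    · intro j
      by_contra hne
      have hlt : ∑ i, C i j < μ := lt_of_le_of_ne (hcol j) hne
      have : ∑ j, ∑ i, C i j < ∑ _j : Fin k, μ :=
        Finset.sum_lt_sum (fun j _ => hcol j) ⟨j, Finset.mem_univ j, hlt⟩
      rw [Finset.sum_comm] at this
      simp [mul_comm] at this
      omega
  | succ d ih =>
    have hlt : ∑ i, ∑ j, C i j < k * μ := by omega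
    obtain ⟨i0, hi0⟩ : ∃ i0, ∑ j, C i0 j < μ := by
      by_contra hc
      push_neg at hc
      have : ∑ i : Fin k, ∑ j, C i j = ∑ _i : Fin k, μ :=
        Finset.sum_congr rfl fun i _ => le_antisymm (hrow i) (hc i)
      simp [mul_comm] at this
      omega
    obtain ⟨j0, hj0⟩ : ∃ j0, ∑ i, C i j0 < μ := by
      by_contra hc
      push_neg at hc
      have : ∑ j : Fin k, ∑ i, C i j = ∑ _j : Fin k, μ :=
        Finset.sum_congr rfl fun j _ => le_antisymm (hcol j) (hc j)
      rw [Finset.sum_comm] at this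
      simp [mul_comm] at this
      omega
    set C' : Fin k → Fin k → ℕ := fun i j => C i j + (if i = i0 ∧ j = j0 then 1 else 0) with hC'
    have hrowC' : ∀ i, ∑ j, C' i j = ∑ j, C i j + (if i = i0 then 1 else 0) := by
      intro i
      rw [Finset.sum_add_distrib]
      congr 1
      by_cases h : i = i0 <;> simp [h]
    have hcolC' : ∀ j, ∑ i, C' i j = ∑ i, C i j + (if j = j0 then 1 else 0) := by
      intro j
      rw [Finset.sum_add_distrib]
      congr 1
      by_cases h : j = j0 <;> simp [h]
    have hr' : ∀ i, ∑ j, C' i j ≤ μ := by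
      intro i
      rw [hrowC' i]
      by_cases h : i = i0
      · subst h; simp; omega
      · simp [h]; exact hrow i
    have hc' : ∀ j, ∑ i, C' i j ≤ μ := by
      intro j
      rw [hcolC' j]
      by_cases h : j = j0
      · subst h; simp; omega
      · simp [h]; exact hcol j
    have htotC' : ∑ i, ∑ j, C' i j = ∑ i, ∑ j, C i j + 1 := by
      calc ∑ i, ∑ j, C' i j = ∑ i, (∑ j, C i j + if i = i0 then 1 else 0) :=
            Finset.sum_congr rfl fun i _ => hrowC' i
      _ = ∑ i, ∑ j, C i j + ∑ i : Fin k, (if i = i0 then 1 else 0) := Finset.sum_add_distrib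
      _ = ∑ i, ∑ j, C i j + 1 := by simp
    obtain ⟨D, hD1, hD2, hD3⟩ := ih C' hr' hc' (by omega) (by omega)
    exact ⟨D, fun i j => le_trans (by simp [hC']) (hD1 i j), hD2, hD3⟩

/-- Hall: a ℕ-matrix with all row and column sums equal to μ > 0 has a permutation
in its support. -/
lemma exists_perm_of_regular (k μ : ℕ) (hμ : 0 < μ) (D : Fin k → Fin k → ℕ)
    (hrow : ∀ i, ∑ j, D i j = μ) (hcol : ∀ j, ∑ i, D i j = μ) :
    ∃ σ : Equiv.Perm (Fin k), ∀ i, 0 < D i (σ i) := by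
  classical
  set t : Fin k → Finset (Fin k) := fun i => Finset.univ.filter (fun j => 0 < D i j) with ht
  have hall : ∀ s : Finset (Fin k), s.card ≤ (s.biUnion t).card := by
    intro s
    have key : s.card * μ ≤ (s.biUnion t).card * μ := by
      calc s.card * μ = ∑ i ∈ s, μ := by rw [Finset.sum_const, smul_eq_mul]
      _ = ∑ i ∈ s, ∑ j, D i j := Finset.sum_congr rfl fun i _ => (hrow i).symm
      _ = ∑ j : Fin k, ∑ i ∈ s, D i j := Finset.sum_comm
      _ = ∑ j ∈ s.biUnion t, ∑ i ∈ s, D i j := by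
          refine (Finset.sum_subset (Finset.subset_univ _) ?_).symm
          intro j _ hj
          apply Finset.sum_eq_zero
          intro i hi
          by_contra hne
          exact hj (Finset.mem_biUnion.mpr ⟨i, hi, by simp [ht, Nat.pos_of_ne_zero hne]⟩)
      _ ≤ ∑ j ∈ s.biUnion t, μ := by
          apply Finset.sum_le_sum
          intro j _
          rw [← hcol j]
          exact Finset.sum_le_sum_of_subset (Finset.subset_univ s)
      _ = (s.biUnion t).card * μ := by rw [Finset.sum_const, smul_eq_mul]
    exact Nat.le_of_mul_le_mul_right key hμ
  obtain ⟨f, hfinj, hf⟩ := (Finset.all_card_le_biUnion_card_iff_exists_injective t).mp hall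
  refine ⟨Equiv.ofBijective f (Finite.injective_iff_bijective.mp hfinj), fun i => ?_⟩
  have := hf i
  simp only [ht, Finset.mem_filter] at this
  exact this.2

/-- Step: extract a partial matching hitting every row and column of full degree μ. -/
lemma exists_matching_step (m n μ : ℕ) (hμ : 0 < μ) (B : Fin m → Fin n → ℕ)
    (hB01 : ∀ i j, B i j ≤ 1) (hBrow : ∀ i, ∑ j, B i j ≤ μ) (hBcol : ∀ j, ∑ i, B i j ≤ μ) :
    ∃ A : Fin m → Fin n → ℕ, (∀ i j, A i j ≤ B i j) ∧
      (∀ i, ∑ j, A i j ≤ 1) ∧ (∀ j, ∑ i, A i j ≤ 1) ∧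
      (∀ i, ∑ j, B i j = μ → 1 ≤ ∑ j, A i j) ∧
      (∀ j, ∑ i, B i j = μ → 1 ≤ ∑ i, A i j) := by
  classical
  set k := m + n with hk
  have hm : m ≤ k := Nat.le_add_right m n
  have hn : n ≤ k := Nat.le_add_left n m
  set C : Fin k → Fin k → ℕ := fun p q =>
    if hp : (p : ℕ) < m then (if hq : (q : ℕ) < n then B ⟨p.1, hp⟩ ⟨q.1, hq⟩ else 0) else 0
    with hC
  have hCrow : ∀ p : Fin k, (p : ℕ) < m → ∀ hp : (p : ℕ) < m,
      ∑ q, C p q = ∑ j, B ⟨p.1, hp⟩ j := by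
    intro p _ hp
    have : ∀ q : Fin k, C p q = if hq : (q : ℕ) < n then B ⟨p.1, hp⟩ ⟨q.1, hq⟩ else 0 := by
      intro q; simp [hC, hp]
    rw [Finset.sum_congr rfl fun q _ => this q]
    exact sum_dite_fin hn _
  have hCrow0 : ∀ p : Fin k, ¬ (p : ℕ) < m → ∑ q, C p q = 0 := by
    intro p hp
    apply Finset.sum_eq_zero
    intro q _
    simp [hC, hp]
  have hCcol : ∀ q : Fin k, ∀ hq : (q : ℕ) < n, ∑ p, C p q = ∑ i, B i ⟨q.1, hq⟩ := by
    intro q hq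
    have : ∀ p : Fin k, C p q = if hp : (p : ℕ) < m then B ⟨p.1, hp⟩ ⟨q.1, hq⟩ else 0 := by
      intro p
      by_cases hp : (p : ℕ) < m <;> simp [hC, hp, hq]
    rw [Finset.sum_congr rfl fun p _ => this p]
    exact sum_dite_fin (M := ℕ) hm fun p => B p ⟨q.1, hq⟩
  have hCcol0 : ∀ q : Fin k, ¬ (q : ℕ) < n → ∑ p, C p q = 0 := by
    intro q hq
    apply Finset.sum_eq_zero
    intro p _
    by_cases hp : (p : ℕ) < m <;> simp [hC, hp, hq]
  have hCr : ∀ p, ∑ q, C p q ≤ μ := by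
    intro p
    by_cases hp : (p : ℕ) < m
    · rw [hCrow p hp hp]; exact hBrow _
    · rw [hCrow0 p hp]; omega
  have hCc : ∀ q, ∑ p, C p q ≤ μ := by
    intro q
    by_cases hq : (q : ℕ) < n
    · rw [hCcol q hq]; exact hBcol _
    · rw [hCcol0 q hq]; omega
  obtain ⟨D, hCD, hDr, hDc⟩ := exists_regular_extension k μ C hCr hCc
  obtain ⟨σ, hσ⟩ := exists_perm_of_regular k μ hμ D hDr hDc
  set A : Fin m → Fin n → ℕ := fun i j =>
    if (σ (Fin.castLE hm i) : ℕ) = (j : ℕ) ∧ B i j = 1 then 1 else 0 with hA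
  have hAle : ∀ i j, A i j ≤ B i j := by
    intro i j
    by_cases h : (σ (Fin.castLE hm i) : ℕ) = (j : ℕ) ∧ B i j = 1
    · simp [hA, h, h.2]
    · simp [hA, h]
  have hArow : ∀ i, ∑ j, A i j ≤ 1 := by
    intro i
    calc ∑ j, A i j ≤ ∑ j : Fin n, if (σ (Fin.castLE hm i) : ℕ) = (j : ℕ) then 1 else 0 := by
          apply Finset.sum_le_sum
          intro j _
          by_cases h : (σ (Fin.castLE hm i) : ℕ) = (j : ℕ) ∧ B i j = 1
          · simp [hA, h, h.1]
          · simp only [hA, if_neg h]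
            exact Nat.zero_le _
    _ ≤ 1 := sum_indicator_le_one' n _
  have hAcol : ∀ j, ∑ i, A i j ≤ 1 := by
    intro j
    calc ∑ i, A i j ≤ ∑ i : Fin m, if (i : ℕ) = (σ.symm (Fin.castLE hn j) : ℕ) then 1 else 0 := by
          apply Finset.sum_le_sum
          intro i _
          by_cases h : (σ (Fin.castLE hm i) : ℕ) = (j : ℕ) ∧ B i j = 1
          · have : σ (Fin.castLE hm i) = Fin.castLE hn j := Fin.ext (by simpa using h.1)
            have h2 : Fin.castLE hm i = σ.symm (Fin.castLE hn j) := by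
              rw [← this, Equiv.symm_apply_apply]
            have h3 : (i : ℕ) = (σ.symm (Fin.castLE hn j) : ℕ) := by
              rw [← h2]; simp
            simp [hA, h, h3]
          · simp only [hA, if_neg h]
            exact Nat.zero_le _
    _ ≤ 1 := sum_indicator_le_one m _
  -- covering full rows
  have hrowfull : ∀ i, ∑ j, B i j = μ → 1 ≤ ∑ j, A i j := by
    intro i hfull
    set p := Fin.castLE hm i with hp
    have hpm : (p : ℕ) < m := i.2
    have hrowsum : ∑ q, C p q = μ := by
      rw [hCrow p hpm hpm]
      simpa [hp] using hfull
    have hCeqD : ∀ q, C p q = D p q := by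
      have := (Finset.sum_eq_sum_iff_of_le (fun q (_ : q ∈ Finset.univ) => hCD p q)).mp
        (by rw [hrowsum, hDr p])
      exact fun q => this q (Finset.mem_univ q)
    have hpos : 0 < C p (σ p) := by rw [hCeqD]; exact hσ p
    have hq : ((σ p : Fin k) : ℕ) < n := by
      by_contra hq
      simp [hC, hq] at hpos
    have hBpos : B ⟨p.1, hpm⟩ ⟨(σ p : Fin k).1, hq⟩ = 1 := by
      have : C p (σ p) = B ⟨p.1, hpm⟩ ⟨(σ p : Fin k).1, hq⟩ := by simp [hC, hpm, hq]
      rw [this] at hpos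
      have := hB01 ⟨p.1, hpm⟩ ⟨(σ p : Fin k).1, hq⟩
      omega
    have hi : (⟨p.1, hpm⟩ : Fin m) = i := by simp [hp]
    set j0 : Fin n := ⟨(σ p : Fin k).1, hq⟩ with hj0
    have hAij : A i j0 = 1 := by
      rw [hi] at hBpos
      simp [hA, hj0, hp, hBpos]
      exact hBpos
    calc 1 = A i j0 := hAij.symm
    _ ≤ ∑ j, A i j := Finset.single_le_sum (f := fun j => A i j) (fun j _ => Nat.zero_le _) (Finset.mem_univ j0)
  have hcolfull : ∀ j, ∑ i, B i j = μ → 1 ≤ ∑ i, A i j := by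
    intro j hfull
    set q := Fin.castLE hn j with hq
    have hqn : (q : ℕ) < n := j.2
    have hcolsum : ∑ p, C p q = μ := by
      rw [hCcol q hqn]
      simpa [hq] using hfull
    have hCeqD : ∀ p, C p q = D p q := by
      have : ∑ p, C p q = ∑ p, D p q := by
        rw [hcolsum, hDc q]
      have := (Finset.sum_eq_sum_iff_of_le (fun p (_ : p ∈ Finset.univ) => hCD p q)).mp this
      exact fun p => this p (Finset.mem_univ p)
    set p0 := σ.symm q with hp0
    have hσp0 : σ p0 = q := Equiv.apply_symm_apply σ q
    have hpos : 0 < C p0 q := by rw [hCeqD]; rw [← hσp0]; exact hσ p0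
    have hpm : (p0 : ℕ) < m := by
      by_contra hp
      simp [hC, hp] at hpos
    have hBpos : B ⟨p0.1, hpm⟩ ⟨q.1, hqn⟩ = 1 := by
      have : C p0 q = B ⟨p0.1, hpm⟩ ⟨q.1, hqn⟩ := by simp [hC, hpm, hqn]
      rw [this] at hpos
      have := hB01 ⟨p0.1, hpm⟩ ⟨q.1, hqn⟩
      omega
    have hj : (⟨q.1, hqn⟩ : Fin n) = j := by simp [hq]
    set i0 : Fin m := ⟨p0.1, hpm⟩ with hi0
    have hcast : Fin.castLE hm i0 = p0 := Fin.ext (by simp [hi0])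
    have hAij : A i0 j = 1 := by
      rw [hj] at hBpos
      have hcond : (σ (Fin.castLE hm i0) : ℕ) = (j : ℕ) := by
        rw [hcast, hσp0]; simp [hq]
      simp [hA, hcond, hBpos]
    calc 1 = A i0 j := hAij.symm
    _ ≤ ∑ i, A i j := Finset.single_le_sum (f := fun i => A i j) (fun i _ => Nat.zero_le _) (Finset.mem_univ i0)
  exact ⟨A, hAle, hArow, hAcol, hrowfull, hcolfull⟩

/-- Core lemma in ℕ: extraction of a partial matching with a 1/μ weight fraction. -/
lemma core_matching (μ : ℕ) (hμ : 0 < μ) : ∀ (m n : ℕ) (B : Fin m → Fin n → ℕ),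
    (∀ i j, B i j ≤ 1) → (∀ i, ∑ j, B i j ≤ μ) → (∀ j, ∑ i, B i j ≤ μ) →
    ∀ (S : Fin m → Fin n → ℝ), (∀ i j, 0 ≤ S i j) →
    ∃ A : Fin m → Fin n → ℕ, (∀ i j, A i j ≤ B i j) ∧
      (∀ i, ∑ j, A i j ≤ 1) ∧ (∀ j, ∑ i, A i j ≤ 1) ∧
      ∑ i, ∑ j, (B i j : ℝ) * S i j ≤ (μ : ℝ) * ∑ i, ∑ j, (A i j : ℝ) * S i j := by
  induction μ with
  | zero => exact absurd hμ (lt_irrefl 0)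
  | succ μ' ih =>
    intro m n B hB01 hBrow hBcol S hS
    rcases Nat.eq_zero_or_pos μ' with hz | hpos
    · -- μ = 1 : B is itself a matching
      subst hz
      refine ⟨B, fun i j => le_rfl, hBrow, hBcol, ?_⟩
      simp
    · -- μ = μ' + 1 with μ' ≥ 1
      obtain ⟨A₁, hA₁le, hA₁row, hA₁col, hA₁rf, hA₁cf⟩ :=
        exists_matching_step m n (μ' + 1) (Nat.succ_pos μ') B hB01 hBrow hBcol
      set B₂ : Fin m → Fin n → ℕ := fun i j => B i j - A₁ i j with hB₂
      have hB₂le : ∀ i j, B₂ i j ≤ B i j := fun i j => Nat.sub_le _ _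
      have hB₂01 : ∀ i j, B₂ i j ≤ 1 := fun i j => le_trans (hB₂le i j) (hB01 i j)
      have hsum_row : ∀ i, ∑ j, B₂ i j = ∑ j, B i j - ∑ j, A₁ i j := by
        intro i
        exact Finset.sum_tsub_distrib Finset.univ fun j _ => hA₁le i j
      have hsum_col : ∀ j, ∑ i, B₂ i j = ∑ i, B i j - ∑ i, A₁ i j := by
        intro j
        exact Finset.sum_tsub_distrib Finset.univ fun i _ => hA₁le i j
      have hB₂row : ∀ i, ∑ j, B₂ i j ≤ μ' := by
        intro i
        rw [hsum_row i]
        rcases eq_or_lt_of_le (hBrow i) with heq | hlt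
        · have := hA₁rf i heq
          omega
        · omega
      have hB₂col : ∀ j, ∑ i, B₂ i j ≤ μ' := by
        intro j
        rw [hsum_col j]
        rcases eq_or_lt_of_le (hBcol j) with heq | hlt
        · have := hA₁cf j heq
          omega
        · omega
      obtain ⟨A₂, hA₂le, hA₂row, hA₂col, hA₂w⟩ := ih hpos m n B₂ hB₂01 hB₂row hB₂col S hS
      have hsplit : ∑ i, ∑ j, (B i j : ℝ) * S i j =
          ∑ i, ∑ j, (B₂ i j : ℝ) * S i j + ∑ i, ∑ j, (A₁ i j : ℝ) * S i j := by
        rw [← Finset.sum_add_distrib]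
        apply Finset.sum_congr rfl
        intro i _
        rw [← Finset.sum_add_distrib]
        apply Finset.sum_congr rfl
        intro j _
        have : (B₂ i j : ℝ) = (B i j : ℝ) - (A₁ i j : ℝ) := by
          rw [hB₂]
          push_cast [Nat.cast_sub (hA₁le i j)]
          ring
        rw [this]
        ring
      set w₁ := ∑ i, ∑ j, (A₁ i j : ℝ) * S i j with hw₁
      set w₂ := ∑ i, ∑ j, (A₂ i j : ℝ) * S i j with hw₂
      have hw₁nn : 0 ≤ w₁ := by
        apply Finset.sum_nonneg; intro i _
        apply Finset.sum_nonneg; intro j _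
        exact mul_nonneg (Nat.cast_nonneg _) (hS i j)
      have hw₂nn : 0 ≤ w₂ := by
        apply Finset.sum_nonneg; intro i _
        apply Finset.sum_nonneg; intro j _
        exact mul_nonneg (Nat.cast_nonneg _) (hS i j)
      rcases le_total w₁ w₂ with hle | hle
      · refine ⟨A₂, fun i j => le_trans (hA₂le i j) (hB₂le i j), hA₂row, hA₂col, ?_⟩
        rw [hsplit]
        push_cast
        calc ∑ i, ∑ j, (B₂ i j : ℝ) * S i j + w₁ ≤ (μ' : ℝ) * w₂ + w₂ := by
              apply add_le_add hA₂w hle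
        _ = ((μ' : ℝ) + 1) * w₂ := by ring
      · refine ⟨A₁, hA₁le, hA₁row, hA₁col, ?_⟩
        rw [hsplit]
        push_cast
        calc ∑ i, ∑ j, (B₂ i j : ℝ) * S i j + w₁ ≤ (μ' : ℝ) * w₂ + w₁ := by
              apply add_le_add hA₂w le_rfl
        _ ≤ (μ' : ℝ) * w₁ + w₁ := by
              have : (μ' : ℝ) * w₂ ≤ (μ' : ℝ) * w₁ :=
                mul_le_mul_of_nonneg_left hle (Nat.cast_nonneg _)
              linarith
        _ = ((μ' : ℝ) + 1) * w₁ := by ring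

/-- From a 0-1 matrix `B` with row and column sums at most `μ` and a nonnegative
weight matrix `S`, one can extract a 0-1 submatrix `A` with row and column sums at
most 1 capturing at least a `1/μ` fraction of the weight. -/
theorem exists_partial_matching_of_bounded_degree (m n : ℕ) (μ : ℕ) (hμ : 0 < μ)
    (B : Fin m → Fin n → ℝ) (hB01 : ∀ i j, B i j = 0 ∨ B i j = 1)
    (hBrow : ∀ i, ∑ j, B i j ≤ μ) (hBcol : ∀ j, ∑ i, B i j ≤ μ)
    (S : Fin m → Fin n → ℝ) (hS : ∀ i j, 0 ≤ S i j) :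
    ∃ A : Fin m → Fin n → ℝ, (∀ i j, A i j = 0 ∨ A i j = 1) ∧
      (∀ i j, A i j ≤ B i j) ∧
      (∀ i, ∑ j, A i j ≤ 1) ∧ (∀ j, ∑ i, A i j ≤ 1) ∧
      (1 / (μ : ℝ)) * ∑ i, ∑ j, B i j * S i j ≤ ∑ i, ∑ j, A i j * S i j := by
  classical
  set B' : Fin m → Fin n → ℕ := fun i j => if B i j = 1 then 1 else 0 with hB'
  have hcast : ∀ i j, (B' i j : ℝ) = B i j := by
    intro i j
    rcases hB01 i j with h | h <;> simp [hB', h]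
  have hB'01 : ∀ i j, B' i j ≤ 1 := by
    intro i j
    by_cases h : B i j = 1 <;> simp [hB', h]
  have hB'row : ∀ i, ∑ j, B' i j ≤ μ := by
    intro i
    have : ((∑ j, B' i j : ℕ) : ℝ) ≤ (μ : ℝ) := by
      push_cast
      calc ∑ j, (B' i j : ℝ) = ∑ j, B i j := Finset.sum_congr rfl fun j _ => hcast i j
      _ ≤ μ := hBrow i
    exact_mod_cast this
  have hB'col : ∀ j, ∑ i, B' i j ≤ μ := by
    intro j
    have : ((∑ i, B' i j : ℕ) : ℝ) ≤ (μ : ℝ) := by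
      push_cast
      calc ∑ i, (B' i j : ℝ) = ∑ i, B i j := Finset.sum_congr rfl fun i _ => hcast i j
      _ ≤ μ := hBcol j
    exact_mod_cast this
  obtain ⟨A', hA'le, hA'row, hA'col, hA'w⟩ :=
    core_matching μ hμ m n B' hB'01 hB'row hB'col S hS
  refine ⟨fun i j => (A' i j : ℝ), ?_, ?_, ?_, ?_, ?_⟩
  · intro i j
    rcases Nat.le_one_iff_eq_zero_or_eq_one.mp (le_trans (hA'le i j) (hB'01 i j)) with h | h <;>
      simp [h]
  · intro i j
    show (A' i j : ℝ) ≤ B i j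
    rw [← hcast i j]
    exact_mod_cast hA'le i j
  · intro i
    have : ((∑ j, A' i j : ℕ) : ℝ) ≤ 1 := by exact_mod_cast hA'row i
    push_cast at this
    exact this
  · intro j
    have : ((∑ i, A' i j : ℕ) : ℝ) ≤ 1 := by exact_mod_cast hA'col j
    push_cast at this
    exact this
  · have hμR : (0 : ℝ) < μ := by exact_mod_cast hμ
    rw [one_div, inv_mul_le_iff₀ hμR]
    calc ∑ i, ∑ j, B i j * S i j = ∑ i, ∑ j, (B' i j : ℝ) * S i j := by
          apply Finset.sum_congr rfl; intro i _
          apply Finset.sum_congr rfl; intro j _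
          rw [hcast]
    _ ≤ (μ : ℝ) * ∑ i, ∑ j, (A' i j : ℝ) * S i j := hA'w
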